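/- Let 𝓑 be a directed family on U with U ∈ 𝓑. Every constructible set X ⊆ U (finite boolean combination of balls) can be written as a finite union of swiss cheeses. -/

import Mathlib

variable {U : Type*}

/-- A directed family: nonempty sets, any two nested or disjoint. -/
def DirFam (𝓑 : Set (Set U)) : Prop :=
  (∀ B ∈ 𝓑, B.Nonempty) ∧
    ∀ B₀ ∈ 𝓑, ∀ B₁ ∈ 𝓑, B₀ ⊆ B₁ ∨ B₁ ⊆ B₀ ∨ B₀ ∩ B₁ = ∅

/-- Constructible sets: finite boolean combinations of balls. -/
inductive Constr (𝓑 : Set (Set U)) : Set U → Prop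
  | ball {B : Set U} : B ∈ 𝓑 → Constr 𝓑 B
  | compl {X : Set U} : Constr 𝓑 X → Constr 𝓑 Xᶜ
  | union {X Y : Set U} : Constr 𝓑 X → Constr 𝓑 Y → Constr 𝓑 (X ∪ Y)

/-- A swiss cheese: a ball minus finitely many proper sub-balls. -/
def IsCheese (𝓑 : Set (Set U)) (S : Set U) : Prop :=
  ∃ A ∈ 𝓑, ∃ H : Set (Set U), H.Finite ∧ H ⊆ 𝓑 ∧ (∀ B ∈ H, B ⊂ A) ∧ S = A \ ⋃₀ H

def FCU (𝓑 : Set (Set U)) (Y : Set U) : Prop :=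
  ∃ 𝓒 : Set (Set U), 𝓒.Finite ∧ (∀ S ∈ 𝓒, IsCheese 𝓑 S) ∧ Y = ⋃₀ 𝓒

lemma fcu_empty (𝓑 : Set (Set U)) : FCU 𝓑 ∅ :=
  ⟨∅, Set.finite_empty, by simp, by simp⟩

lemma fcu_union {𝓑 : Set (Set U)} {X Y : Set U} (hX : FCU 𝓑 X) (hY : FCU 𝓑 Y) :
    FCU 𝓑 (X ∪ Y) := by
  obtain ⟨𝓒, h𝓒f, h𝓒c, rfl⟩ := hX
  obtain ⟨𝓓, h𝓓f, h𝓓c, rfl⟩ := hY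
  exact ⟨𝓒 ∪ 𝓓, h𝓒f.union h𝓓f,
    fun S hS => hS.elim (h𝓒c S) (h𝓓c S), (Set.sUnion_union _ _).symm⟩

lemma cheese_ball {𝓑 : Set (Set U)} {B : Set U} (hB : B ∈ 𝓑) : IsCheese 𝓑 B :=
  ⟨B, hB, ∅, Set.finite_empty, by simp, by simp, by simp⟩

lemma fcu_cheese {𝓑 : Set (Set U)} {S : Set U} (hS : IsCheese 𝓑 S) : FCU 𝓑 S :=
  ⟨{S}, Set.finite_singleton _, by simpa, by simp⟩

lemma cheese_inter_aux {𝓑 : Set (Set U)} (h : DirFam 𝓑) {A A' : Set U}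
    {H H' : Set (Set U)} (hA : A ∈ 𝓑) (hA' : A' ∈ 𝓑)
    (hHf : H.Finite) (hHb : H ⊆ 𝓑) (hHp : ∀ B ∈ H, B ⊂ A)
    (hHf' : H'.Finite) (hHb' : H' ⊆ 𝓑) (hHp' : ∀ B ∈ H', B ⊂ A')
    (hsub : A ⊆ A') :
    FCU 𝓑 ((A \ ⋃₀ H) ∩ (A' \ ⋃₀ H')) := by
  by_cases hex : ∃ B ∈ H', A ⊆ B
  · obtain ⟨B, hB, hAB⟩ := hex
    have : (A \ ⋃₀ H) ∩ (A' \ ⋃₀ H') = ∅ := by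
      apply Set.eq_empty_iff_forall_notMem.mpr
      rintro x ⟨⟨hxA, -⟩, -, hH'⟩
      exact hH' (Set.mem_sUnion.mpr ⟨B, hB, hAB hxA⟩)
    rw [this]; exact fcu_empty 𝓑
  · push_neg at hex
    set K := H ∪ {B ∈ H' | (B ∩ A).Nonempty} with hK
    have hKf : K.Finite := hHf.union (hHf'.subset (Set.sep_subset _ _))
    have hKb : K ⊆ 𝓑 := by
      rintro B (hB | ⟨hB, -⟩)
      exacts [hHb hB, hHb' hB]
    have hKp : ∀ B ∈ K, B ⊂ A := by
      rintro B (hB | ⟨hB, hne⟩)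
      · exact hHp B hB
      · rcases h.2 B (hHb' hB) A hA with hBA | hAB | hd
        · exact lt_of_le_of_ne hBA (fun e => hex B hB (e ▸ le_refl _))
        · exact absurd hAB (hex B hB)
        · exact absurd hd (by rwa [← Set.not_nonempty_iff_eq_empty, not_not])
    refine fcu_cheese ⟨A, hA, K, hKf, hKb, hKp, ?_⟩
    ext x
    simp only [Set.mem_inter_iff, Set.mem_diff, Set.mem_sUnion, not_exists, not_and, hK,
      Set.mem_union, Set.mem_setOf_eq]
    constructor
    · rintro ⟨⟨hxA, hH⟩, hxA', hH'⟩
      refine ⟨hxA, ?_⟩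
      rintro B (hB | ⟨hB, -⟩)
      exacts [hH B hB, hH' B hB]
    · rintro ⟨hxA, hall⟩
      refine ⟨⟨hxA, fun B hB => hall B (Or.inl hB)⟩, hsub hxA, fun B hB hxB => ?_⟩
      exact hall B (Or.inr ⟨hB, x, hxB, hxA⟩) hxB

lemma cheese_inter {𝓑 : Set (Set U)} (h : DirFam 𝓑) {S T : Set U}
    (hS : IsCheese 𝓑 S) (hT : IsCheese 𝓑 T) : FCU 𝓑 (S ∩ T) := by
  obtain ⟨A, hA, H, hHf, hHb, hHp, rfl⟩ := hS
  obtain ⟨A', hA', H', hHf', hHb', hHp', rfl⟩ := hT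
  rcases h.2 A hA A' hA' with hsub | hsub | hd
  · exact cheese_inter_aux h hA hA' hHf hHb hHp hHf' hHb' hHp' hsub
  · rw [Set.inter_comm]
    exact cheese_inter_aux h hA' hA hHf' hHb' hHp' hHf hHb hHp hsub
  · have : (A \ ⋃₀ H) ∩ (A' \ ⋃₀ H') = ∅ := by
      apply Set.eq_empty_of_subset_empty
      rw [← hd]
      exact Set.inter_subset_inter (Set.diff_subset) (Set.diff_subset)
    rw [this]; exact fcu_empty 𝓑

lemma fcu_inter_cheese {𝓑 : Set (Set U)} (h : DirFam 𝓑) {S Y : Set U}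
    (hS : IsCheese 𝓑 S) (hY : FCU 𝓑 Y) : FCU 𝓑 (S ∩ Y) := by
  obtain ⟨𝓓, h𝓓f, h𝓓c, rfl⟩ := hY
  revert h𝓓c
  induction 𝓓, h𝓓f using Set.Finite.induction_on with
  | empty => intro _; simpa using fcu_empty 𝓑
  | @insert T 𝓓 _ _ ih =>
    intro h𝓓c
    rw [Set.sUnion_insert, Set.inter_union_distrib_left]
    exact fcu_union (cheese_inter h hS (h𝓓c T (Set.mem_insert _ _)))
      (ih fun S hS => h𝓓c S (Set.mem_insert_of_mem _ hS))

lemma fcu_inter {𝓑 : Set (Set U)} (h : DirFam 𝓑) {X Y : Set U}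
    (hX : FCU 𝓑 X) (hY : FCU 𝓑 Y) : FCU 𝓑 (X ∩ Y) := by
  obtain ⟨𝓒, h𝓒f, h𝓒c, rfl⟩ := hX
  revert h𝓒c
  induction 𝓒, h𝓒f using Set.Finite.induction_on with
  | empty => intro _; simpa using fcu_empty 𝓑
  | @insert S 𝓒 _ _ ih =>
    intro h𝓒c
    rw [Set.sUnion_insert, Set.union_inter_distrib_right]
    exact fcu_union (fcu_inter_cheese h (h𝓒c S (Set.mem_insert _ _)) hY)
      (ih fun S hS => h𝓒c S (Set.mem_insert_of_mem _ hS))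

lemma cheese_compl {𝓑 : Set (Set U)} (hU : (Set.univ : Set U) ∈ 𝓑) {S : Set U}
    (hS : IsCheese 𝓑 S) : FCU 𝓑 Sᶜ := by
  obtain ⟨A, hA, H, hHf, hHb, hHp, rfl⟩ := hS
  have : (A \ ⋃₀ H)ᶜ = Aᶜ ∪ ⋃₀ H := by
    simp [Set.diff_eq, Set.compl_inter]
  rw [this]
  refine fcu_union ?_ ⟨H, hHf, fun B hB => cheese_ball (hHb hB), rfl⟩
  by_cases hAuniv : A = Set.univ
  · rw [hAuniv]; simpa using fcu_empty 𝓑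
  · refine fcu_cheese ⟨Set.univ, hU, {A}, Set.finite_singleton _, by simpa, ?_,
      by simp [Set.compl_eq_univ_diff]⟩
    simp only [Set.mem_singleton_iff]
    rintro B rfl
    exact Set.ssubset_univ_iff.mpr hAuniv

lemma fcu_compl {𝓑 : Set (Set U)} (h : DirFam 𝓑) (hU : (Set.univ : Set U) ∈ 𝓑)
    {Y : Set U} (hY : FCU 𝓑 Y) : FCU 𝓑 Yᶜ := by
  obtain ⟨𝓒, h𝓒f, h𝓒c, rfl⟩ := hY
  revert h𝓒c
  induction 𝓒, h𝓒f using Set.Finite.induction_on with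
  | empty =>
    intro _
    simp only [Set.sUnion_empty, Set.compl_empty]
    exact fcu_cheese (cheese_ball hU)
  | @insert S 𝓒 _ _ ih =>
    intro h𝓒c
    rw [Set.sUnion_insert, Set.compl_union]
    exact fcu_inter h (cheese_compl hU (h𝓒c S (Set.mem_insert _ _)))
      (ih fun S hS => h𝓒c S (Set.mem_insert_of_mem _ hS))


/-- Every constructible set is a finite union of swiss cheeses. -/
theorem stmt3 (𝓑 : Set (Set U)) (h : DirFam 𝓑) (hU : (Set.univ : Set U) ∈ 𝓑)
    (X : Set U) (hX : Constr 𝓑 X) :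
    ∃ 𝓒 : Set (Set U), 𝓒.Finite ∧ (∀ S ∈ 𝓒, IsCheese 𝓑 S) ∧ X = ⋃₀ 𝓒 := by
  induction hX with
  | ball hB => exact fcu_cheese (cheese_ball hB)
  | compl _ ih => exact fcu_compl h hU ih
  | union _ _ ih1 ih2 => exact fcu_union ih1 ih2
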